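/- Let 0 < ρ < 1. Then lim_{A→∞} √(A/(2π)) · (1−ρ) · ∫_0^∞ √(x·(x+1)) · exp(−A·Φ(x)) dx = ρ/(1−ρ). -/

import Mathlib

noncomputable section

open Real Filter Set Topology MeasureTheory

/-- `Φ(x) = x log(x/ρ) − (x+1) log(x+1) − log(1−ρ)`. -/
def Phi (ρ x : ℝ) : ℝ :=
  x * Real.log (x / ρ) - (x + 1) * Real.log (x + 1) - Real.log (1 - ρ)

namespace LaplaceAux

/-- The derivative of `Phi`. -/
def PhiD (ρ x : ℝ) : ℝ := Real.log x - Real.log (x + 1) - Real.log ρ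

lemma measurable_Phi (ρ : ℝ) : Measurable (Phi ρ) := by
  unfold Phi
  exact ((measurable_id.mul (Real.measurable_log.comp (measurable_id.div_const ρ))).sub
    ((measurable_id.add_const 1).mul
      (Real.measurable_log.comp (measurable_id.add_const 1)))).sub_const _

lemma hasDerivAt_Phi {ρ x : ℝ} (hρ0 : 0 < ρ) (hx : 0 < x) :
    HasDerivAt (Phi ρ) (PhiD ρ x) x := by
  have hx1 : (0:ℝ) < x + 1 := by linarith
  have hA : HasDerivAt (fun y : ℝ => y * (Real.log y - Real.log ρ))
      (1 * (Real.log x - Real.log ρ) + x * x⁻¹) x :=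
    (hasDerivAt_id x).mul ((Real.hasDerivAt_log hx.ne').sub_const (Real.log ρ))
  have hB : HasDerivAt (fun y : ℝ => (y + 1) * Real.log (y + 1))
      (1 * Real.log (x + 1) + (x + 1) * ((x + 1)⁻¹ * 1)) x := by
    have hlog : HasDerivAt (fun y : ℝ => Real.log (y + 1)) ((x + 1)⁻¹ * 1) x := by
      have := (Real.hasDerivAt_log hx1.ne').comp x ((hasDerivAt_id x).add_const 1); exact this
    exact ((hasDerivAt_id x).add_const 1).mul hlog
  have h1 : HasDerivAt (fun y : ℝ =>
      y * (Real.log y - Real.log ρ) - (y + 1) * Real.log (y + 1) - Real.log (1 - ρ))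
      (PhiD ρ x) x := by
    have := (hA.sub hB).sub_const (Real.log (1 - ρ))
    refine this.congr_deriv ?_
    unfold PhiD
    field_simp
    ring
  apply h1.congr_of_eventuallyEq
  filter_upwards [isOpen_Ioi.mem_nhds (show x ∈ Ioi (0:ℝ) from hx)] with y hy
  unfold Phi
  rw [Real.log_div (ne_of_gt hy) hρ0.ne']

lemma hasDerivAt_PhiD {ρ x : ℝ} (hx : 0 < x) :
    HasDerivAt (PhiD ρ) ((x * (x + 1))⁻¹) x := by
  have hx1 : (0:ℝ) < x + 1 := by linarith
  have hlog : HasDerivAt (fun y : ℝ => Real.log (y + 1)) ((x + 1)⁻¹ * 1) x := by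
    have := (Real.hasDerivAt_log hx1.ne').comp x ((hasDerivAt_id x).add_const 1); exact this
  have h := ((Real.hasDerivAt_log hx.ne').sub hlog).sub_const (Real.log ρ)
  refine h.congr_deriv ?_
  rw [mul_inv]
  field_simp
  ring

/-- generic helper: a point where the (monotone) derivative vanishes is a minimum. -/
lemma min_on_Icc {f f' : ℝ → ℝ} {a b x₀ : ℝ} (hx : x₀ ∈ Icc a b)
    (hd : ∀ x ∈ Icc a b, HasDerivAt f (f' x) x)
    (hmono : MonotoneOn f' (Icc a b)) (h0 : f' x₀ = 0) :
    ∀ x ∈ Icc a b, f x₀ ≤ f x := by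
  intro x hxm
  rcases le_total x x₀ with h | h
  · -- f antitone on Icc a x₀
    have hsub : Icc a x₀ ⊆ Icc a b := Icc_subset_Icc le_rfl hx.2
    have hanti : AntitoneOn f (Icc a x₀) := by
      apply antitoneOn_of_deriv_nonpos (convex_Icc a x₀)
      · exact fun y hy => (hd y (hsub hy)).continuousAt.continuousWithinAt
      · intro y hy
        rw [interior_Icc] at hy
        exact (hd y (hsub (Ioo_subset_Icc_self hy))).differentiableAt.differentiableWithinAt
      · intro y hy
        rw [interior_Icc] at hy
        rw [(hd y (hsub (Ioo_subset_Icc_self hy))).deriv]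
        have : f' y ≤ f' x₀ := hmono (hsub (Ioo_subset_Icc_self hy)) hx hy.2.le
        linarith [h0 ▸ this]
    exact hanti ⟨hxm.1, h⟩ ⟨hx.1, le_rfl⟩ h
  · -- f monotone on Icc x₀ b
    have hsub : Icc x₀ b ⊆ Icc a b := Icc_subset_Icc hx.1 le_rfl
    have hmonof : MonotoneOn f (Icc x₀ b) := by
      apply monotoneOn_of_deriv_nonneg (convex_Icc x₀ b)
      · exact fun y hy => (hd y (hsub hy)).continuousAt.continuousWithinAt
      · intro y hy
        rw [interior_Icc] at hy
        exact (hd y (hsub (Ioo_subset_Icc_self hy))).differentiableAt.differentiableWithinAt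
      · intro y hy
        rw [interior_Icc] at hy
        rw [(hd y (hsub (Ioo_subset_Icc_self hy))).deriv]
        have : f' x₀ ≤ f' y := hmono hx (hsub (Ioo_subset_Icc_self hy)) hy.1.le
        linarith [h0 ▸ this]
    exact hmonof ⟨le_rfl, hx.2⟩ ⟨h, hxm.2⟩ h

/-- generic helper: monotonicity from pointwise derivatives. -/
lemma monoOn_of_hasDerivAt_nonneg {f f' : ℝ → ℝ} {a b : ℝ}
    (hd : ∀ x ∈ Icc a b, HasDerivAt f (f' x) x)
    (h0 : ∀ x ∈ Ioo a b, 0 ≤ f' x) : MonotoneOn f (Icc a b) := by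
  apply monotoneOn_of_deriv_nonneg (convex_Icc a b)
  · exact fun y hy => (hd y hy).continuousAt.continuousWithinAt
  · intro y hy
    rw [interior_Icc] at hy
    exact (hd y (Ioo_subset_Icc_self hy)).differentiableAt.differentiableWithinAt
  · intro y hy
    rw [interior_Icc] at hy
    rw [(hd y (Ioo_subset_Icc_self hy)).deriv]
    exact h0 y hy

/-- generic helper: antitonicity from pointwise derivatives. -/
lemma antiOn_of_hasDerivAt_nonpos {f f' : ℝ → ℝ} {a b : ℝ}
    (hd : ∀ x ∈ Icc a b, HasDerivAt f (f' x) x)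
    (h0 : ∀ x ∈ Ioo a b, f' x ≤ 0) : AntitoneOn f (Icc a b) := by
  apply antitoneOn_of_deriv_nonpos (convex_Icc a b)
  · exact fun y hy => (hd y hy).continuousAt.continuousWithinAt
  · intro y hy
    rw [interior_Icc] at hy
    exact (hd y (Ioo_subset_Icc_self hy)).differentiableAt.differentiableWithinAt
  · intro y hy
    rw [interior_Icc] at hy
    rw [(hd y (Ioo_subset_Icc_self hy)).deriv]
    exact h0 y hy

section Rho

variable {ρ : ℝ} (hρ0 : 0 < ρ) (hρ1 : ρ < 1)
include hρ0 hρ1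
set_option linter.unusedSectionVars false

lemma m_add_one : ρ / (1 - ρ) + 1 = (1 - ρ)⁻¹ := by
  have h : (1:ℝ) - ρ ≠ 0 := by linarith
  field_simp
  ring

lemma m_pos : (0:ℝ) < ρ / (1 - ρ) := div_pos hρ0 (by linarith)

lemma c_pos : (0:ℝ) < (1 - ρ)^2 / ρ := by
  apply div_pos (by nlinarith) hρ0

lemma m_mul : (ρ / (1 - ρ)) * (ρ / (1 - ρ) + 1) = ρ / (1 - ρ)^2 := by
  have h : (1:ℝ) - ρ ≠ 0 := by linarith
  field_simp
  ring

lemma c_eq : ((ρ / (1 - ρ)) * (ρ / (1 - ρ) + 1))⁻¹ = (1 - ρ)^2 / ρ := by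
  rw [m_mul hρ0 hρ1, inv_div]

lemma PhiD_m_eq_zero : PhiD ρ (ρ / (1 - ρ)) = 0 := by
  have h1 : (0:ℝ) < 1 - ρ := by linarith
  have hm := m_pos hρ0 hρ1
  unfold PhiD
  rw [m_add_one hρ0 hρ1, Real.log_inv]
  rw [show ρ / (1 - ρ) = ρ * (1 - ρ)⁻¹ by ring,
    Real.log_mul hρ0.ne' (by positivity), Real.log_inv]
  ring

lemma Phi_m_eq_zero : Phi ρ (ρ / (1 - ρ)) = 0 := by
  have h1 : (0:ℝ) < 1 - ρ := by linarith
  have hm := m_pos hρ0 hρ1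
  unfold Phi
  have hdiv : ρ / (1 - ρ) / ρ = ρ / (1 - ρ) + 1 := by
    rw [m_add_one hρ0 hρ1]; field_simp
  rw [hdiv, m_add_one hρ0 hρ1, Real.log_inv]
  field_simp
  ring

/-- Quadratic sandwich around the minimum. -/
lemma quad_bounds {ε : ℝ} (hε : 0 < ε) :
    ∃ δ > 0, δ < ρ / (1 - ρ) ∧ ∀ s : ℝ, |s| ≤ δ →
      ((1 - ρ)^2 / ρ - ε) / 2 * s^2 ≤ Phi ρ (ρ / (1 - ρ) + s) ∧
      Phi ρ (ρ / (1 - ρ) + s) ≤ ((1 - ρ)^2 / ρ + ε) / 2 * s^2 := by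
  have h1 : (0:ℝ) < 1 - ρ := by linarith
  set m := ρ / (1 - ρ) with hmdef
  set c := (1 - ρ)^2 / ρ with hcdef
  have hm : 0 < m := m_pos hρ0 hρ1
  have hq : ContinuousAt (fun x : ℝ => (x * (x + 1))⁻¹) m := by
    apply ContinuousAt.inv₀
    · exact (continuous_id.mul (continuous_id.add continuous_const)).continuousAt
    · exact ne_of_gt (by nlinarith)
  obtain ⟨δ₀, hδ₀, hH⟩ := Metric.continuousAt_iff.1 hq ε hε
  refine ⟨min (δ₀ / 2) (m / 2), lt_min (by linarith) (by linarith),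
    lt_of_le_of_lt (min_le_right _ _) (by linarith), ?_⟩
  set δ := min (δ₀ / 2) (m / 2) with hδdef
  have hδpos : 0 < δ := lt_min (by linarith) (by linarith)
  have hδm2 : δ ≤ m / 2 := min_le_right _ _
  intro s hs
  have hIsub : ∀ x ∈ Icc (m - δ) (m + δ), (0:ℝ) < x := by
    intro x hx; have := hx.1; linarith
  have hqbound : ∀ x ∈ Icc (m - δ) (m + δ),
      c - ε ≤ (x * (x + 1))⁻¹ ∧ (x * (x + 1))⁻¹ ≤ c + ε := by
    intro x hx
    have hdist : dist x m < δ₀ := by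
      rw [Real.dist_eq]
      have h2 : |x - m| ≤ δ := abs_le.2 ⟨by linarith [hx.1], by linarith [hx.2]⟩
      have h3 : δ ≤ δ₀ / 2 := min_le_left _ _
      linarith
    have hd2 := hH hdist
    rw [Real.dist_eq, c_eq hρ0 hρ1, ← hcdef] at hd2
    have := abs_lt.1 hd2
    exact ⟨by linarith [this.1], by linarith [this.2]⟩
  have hmem : m + s ∈ Icc (m - δ) (m + δ) := by
    have := abs_le.1 hs
    exact ⟨by linarith [this.1], by linarith [this.2]⟩
  have hmmem : m ∈ Icc (m - δ) (m + δ) := ⟨by linarith, by linarith⟩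
  constructor
  · -- lower bound
    have hmin := min_on_Icc (f := fun x => Phi ρ x - (c - ε) / 2 * (x - m)^2)
      (f' := fun x => PhiD ρ x - (c - ε) * (x - m)) hmmem ?_ ?_ ?_
    · have h2 : Phi ρ m - (c - ε) / 2 * (m - m)^2
          ≤ Phi ρ (m + s) - (c - ε) / 2 * (m + s - m)^2 := hmin (m + s) hmem
      have hPm : Phi ρ m = 0 := Phi_m_eq_zero hρ0 hρ1
      rw [hPm] at h2
      have e : m + s - m = s := by ring
      rw [e] at h2
      have h3 : (0:ℝ) - (c - ε) / 2 * (m - m)^2 = 0 := by ring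
      linarith
    · intro x hx
      have hx0 := hIsub x hx
      have hA := hasDerivAt_Phi hρ0 hx0
      have hB : HasDerivAt (fun y : ℝ => (c - ε) / 2 * (y - m)^2) ((c - ε) * (x - m)) x := by
        have := (((hasDerivAt_id x).sub_const m).pow 2).const_mul ((c - ε) / 2)
        refine this.congr_deriv ?_
        simp
        ring
      exact hA.sub hB
    · -- monotonicity of the derivative
      apply monoOn_of_hasDerivAt_nonneg (f' := fun x => (x * (x + 1))⁻¹ - (c - ε))
      · intro x hx
        have hx0 := hIsub x hx
        have hA := hasDerivAt_PhiD (ρ := ρ) hx0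
        have hB : HasDerivAt (fun y : ℝ => (c - ε) * (y - m)) (c - ε) x := by
          have := ((hasDerivAt_id x).sub_const m).const_mul (c - ε)
          refine this.congr_deriv ?_
          simp
        exact hA.sub hB
      · intro x hx
        have := (hqbound x (Ioo_subset_Icc_self hx)).1
        linarith
    · show PhiD ρ m - (c - ε) * (m - m) = 0
      rw [show PhiD ρ m = 0 from PhiD_m_eq_zero hρ0 hρ1]; ring
  · -- upper bound
    have hmin := min_on_Icc (f := fun x => (c + ε) / 2 * (x - m)^2 - Phi ρ x)
      (f' := fun x => (c + ε) * (x - m) - PhiD ρ x) hmmem ?_ ?_ ?_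
    · have h2 : (c + ε) / 2 * (m - m)^2 - Phi ρ m
          ≤ (c + ε) / 2 * (m + s - m)^2 - Phi ρ (m + s) := hmin (m + s) hmem
      have hPm : Phi ρ m = 0 := Phi_m_eq_zero hρ0 hρ1
      rw [hPm] at h2
      have e : m + s - m = s := by ring
      rw [e] at h2
      have h3 : (c + ε) / 2 * (m - m)^2 - 0 = 0 := by ring
      linarith
    · intro x hx
      have hx0 := hIsub x hx
      have hA := hasDerivAt_Phi hρ0 hx0
      have hB : HasDerivAt (fun y : ℝ => (c + ε) / 2 * (y - m)^2) ((c + ε) * (x - m)) x := by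
        have := (((hasDerivAt_id x).sub_const m).pow 2).const_mul ((c + ε) / 2)
        refine this.congr_deriv ?_
        simp
        ring
      exact hB.sub hA
    · apply monoOn_of_hasDerivAt_nonneg (f' := fun x => (c + ε) - (x * (x + 1))⁻¹)
      · intro x hx
        have hx0 := hIsub x hx
        have hA := hasDerivAt_PhiD (ρ := ρ) hx0
        have hB : HasDerivAt (fun y : ℝ => (c + ε) * (y - m)) (c + ε) x := by
          have := ((hasDerivAt_id x).sub_const m).const_mul (c + ε)
          refine this.congr_deriv ?_
          simp
        exact hB.sub hA
      · intro x hx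
        have := (hqbound x (Ioo_subset_Icc_self hx)).2
        linarith
    · show (c + ε) * (m - m) - PhiD ρ m = 0
      rw [show PhiD ρ m = 0 from PhiD_m_eq_zero hρ0 hρ1]; ring

/-- Linear lower bound in the tails. -/
lemma tail_bound {δ : ℝ} (hδ : 0 < δ) (hδm : δ < ρ / (1 - ρ)) :
    ∃ κ > 0, ∀ s : ℝ, -(ρ / (1 - ρ)) < s → δ ≤ |s| →
      κ * |s| ≤ Phi ρ (ρ / (1 - ρ) + s) := by
  have h1 : (0:ℝ) < 1 - ρ := by linarith
  set m := ρ / (1 - ρ) with hmdef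
  have hm : 0 < m := m_pos hρ0 hρ1
  have hmono : ∀ a b : ℝ, 0 < a → MonotoneOn (PhiD ρ) (Icc a b) := by
    intro a b ha
    apply monoOn_of_hasDerivAt_nonneg (f' := fun x => (x * (x + 1))⁻¹)
    · intro x hx; exact hasDerivAt_PhiD (lt_of_lt_of_le ha hx.1)
    · intro x hx
      have hx0 : 0 < x := lt_trans ha hx.1
      positivity
  have hSMD : ∀ a b : ℝ, 0 < a → StrictMonoOn (PhiD ρ) (Icc a b) := by
    intro a b ha
    apply strictMonoOn_of_deriv_pos (convex_Icc a b)
    · intro x hx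
      exact (hasDerivAt_PhiD (lt_of_lt_of_le ha hx.1)).continuousAt.continuousWithinAt
    · intro x hx
      rw [interior_Icc] at hx
      have hx0 : 0 < x := lt_trans ha hx.1
      rw [(hasDerivAt_PhiD hx0).deriv]
      positivity
  have hb : 0 < PhiD ρ (m + δ) := by
    have := hSMD m (m + δ) hm ⟨le_rfl, by linarith⟩ ⟨by linarith, le_rfl⟩ (by linarith)
    rwa [show PhiD ρ m = 0 from PhiD_m_eq_zero hρ0 hρ1] at this
  have hb' : PhiD ρ (m - δ) < 0 := by
    have := hSMD (m - δ) m (by linarith) ⟨le_rfl, by linarith⟩ ⟨by linarith, le_rfl⟩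
      (by linarith)
    rwa [show PhiD ρ m = 0 from PhiD_m_eq_zero hρ0 hρ1] at this
  have hPposR : 0 < Phi ρ (m + δ) := by
    have hSM : StrictMonoOn (Phi ρ) (Icc m (m + δ)) := by
      apply strictMonoOn_of_deriv_pos (convex_Icc _ _)
      · intro x hx
        exact (hasDerivAt_Phi hρ0 (lt_of_lt_of_le hm hx.1)).continuousAt.continuousWithinAt
      · intro x hx
        rw [interior_Icc] at hx
        rw [(hasDerivAt_Phi hρ0 (lt_trans hm hx.1)).deriv]
        have := hSMD m (m + δ) hm ⟨le_rfl, by linarith [hx.2]⟩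
          ⟨hx.1.le, hx.2.le⟩ hx.1
        rwa [show PhiD ρ m = 0 from PhiD_m_eq_zero hρ0 hρ1] at this
    have := hSM ⟨le_rfl, by linarith⟩ ⟨by linarith, le_rfl⟩ (by linarith)
    rwa [show Phi ρ m = 0 from Phi_m_eq_zero hρ0 hρ1] at this
  have hPposL : 0 < Phi ρ (m - δ) := by
    have hSA : StrictAntiOn (Phi ρ) (Icc (m - δ) m) := by
      apply strictAntiOn_of_deriv_neg (convex_Icc _ _)
      · intro x hx
        exact (hasDerivAt_Phi hρ0 (by linarith [hx.1])).continuousAt.continuousWithinAt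
      · intro x hx
        rw [interior_Icc] at hx
        rw [(hasDerivAt_Phi hρ0 (by linarith [hx.1])).deriv]
        have := hSMD (m - δ) m (by linarith) ⟨hx.1.le, hx.2.le⟩
          ⟨by linarith [hx.1], le_rfl⟩ hx.2
        rwa [show PhiD ρ m = 0 from PhiD_m_eq_zero hρ0 hρ1] at this
    have := hSA ⟨le_rfl, by linarith⟩ ⟨by linarith, le_rfl⟩ (by linarith)
    rwa [show Phi ρ m = 0 from Phi_m_eq_zero hρ0 hρ1] at this
  set b := PhiD ρ (m + δ) with hbdef
  set b' := -(PhiD ρ (m - δ)) with hb'def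
  have hb'pos : 0 < b' := by simp only [hb'def]; linarith
  refine ⟨min (min b b') (min (Phi ρ (m + δ) / δ) (Phi ρ (m - δ) / δ)),
    lt_min (lt_min hb hb'pos) (lt_min (div_pos hPposR hδ) (div_pos hPposL hδ)), ?_⟩
  set κ := min (min b b') (min (Phi ρ (m + δ) / δ) (Phi ρ (m - δ) / δ)) with hκdef
  have hκb : κ ≤ b := le_trans (min_le_left _ _) (min_le_left _ _)
  have hκb' : κ ≤ b' := le_trans (min_le_left _ _) (min_le_right _ _)
  have hκR : κ ≤ Phi ρ (m + δ) / δ := le_trans (min_le_right _ _) (min_le_left _ _)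
  have hκL : κ ≤ Phi ρ (m - δ) / δ := le_trans (min_le_right _ _) (min_le_right _ _)
  intro s hs hsδ
  rcases le_or_gt 0 s with hspos | hsneg
  · -- right tail : s ≥ δ
    have hsδ' : δ ≤ s := by rwa [abs_of_nonneg hspos] at hsδ
    have key : Phi ρ (m + δ) + b * (s - δ) ≤ Phi ρ (m + s) := by
      have hMG : MonotoneOn (fun x => Phi ρ x - b * x) (Icc (m + δ) (m + s)) := by
        apply monoOn_of_hasDerivAt_nonneg (f' := fun x => PhiD ρ x - b)
        · intro x hx
          have hx0 : 0 < x := by have := hx.1; linarith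
          have hA := hasDerivAt_Phi hρ0 hx0
          have hB : HasDerivAt (fun y : ℝ => b * y) b x := by
            simpa using (hasDerivAt_id x).const_mul b
          exact hA.sub hB
        · intro x hx
          have := hmono (m + δ) (m + s) (by linarith) ⟨le_rfl, by linarith [hx.1]⟩
            ⟨hx.1.le, hx.2.le⟩ hx.1.le
          linarith
      have h2 : Phi ρ (m + δ) - b * (m + δ) ≤ Phi ρ (m + s) - b * (m + s) :=
        hMG ⟨le_rfl, by linarith⟩ ⟨by linarith, le_rfl⟩ (by linarith)
      have e : b * (m + s) - b * (m + δ) = b * (s - δ) := by ring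
      linarith
    have e1 : κ * δ ≤ Phi ρ (m + δ) := by
      have := mul_le_mul_of_nonneg_right hκR hδ.le
      rwa [div_mul_cancel₀ _ hδ.ne'] at this
    have e2 : κ * (s - δ) ≤ b * (s - δ) :=
      mul_le_mul_of_nonneg_right hκb (by linarith)
    rw [abs_of_nonneg hspos]
    have e3 : κ * s = κ * δ + κ * (s - δ) := by ring
    linarith
  · -- left tail : s ≤ -δ
    have hsδ' : s ≤ -δ := by
      rw [abs_of_neg hsneg] at hsδ; linarith
    have hms : 0 < m + s := by linarith
    have key : Phi ρ (m - δ) + b' * (-s - δ) ≤ Phi ρ (m + s) := by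
      have hAG : AntitoneOn (fun x => Phi ρ x + b' * x) (Icc (m + s) (m - δ)) := by
        apply antiOn_of_hasDerivAt_nonpos (f' := fun x => PhiD ρ x + b')
        · intro x hx
          have hx0 : 0 < x := by have := hx.1; linarith
          have hA := hasDerivAt_Phi hρ0 hx0
          have hB : HasDerivAt (fun y : ℝ => b' * y) b' x := by
            simpa using (hasDerivAt_id x).const_mul b'
          exact hA.add hB
        · intro x hx
          have h3 := hmono (m + s) (m - δ) hms ⟨hx.1.le, hx.2.le⟩
            ⟨by linarith [hx.1], le_rfl⟩ hx.2.le
          have e : b' = -(PhiD ρ (m - δ)) := hb'def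
          rw [e]
          linarith
      have h2 : Phi ρ (m - δ) + b' * (m - δ) ≤ Phi ρ (m + s) + b' * (m + s) :=
        hAG ⟨le_rfl, by linarith⟩ ⟨by linarith, le_rfl⟩ (by linarith)
      have e : b' * (m - δ) - b' * (m + s) = b' * (-s - δ) := by ring
      linarith
    have e1 : κ * δ ≤ Phi ρ (m - δ) := by
      have := mul_le_mul_of_nonneg_right hκL hδ.le
      rwa [div_mul_cancel₀ _ hδ.ne'] at this
    have e2 : κ * (-s - δ) ≤ b' * (-s - δ) :=
      mul_le_mul_of_nonneg_right hκb' (by linarith)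
    rw [abs_of_neg hsneg]
    have e3 : κ * (-s) = κ * δ + κ * (-s - δ) := by ring
    linarith

end Rho

lemma tendsto_sqrt_atTop : Tendsto Real.sqrt atTop atTop := by
  apply tendsto_atTop_atTop.2
  intro b
  refine ⟨(max b 0)^2, fun a ha => le_trans (le_max_left b 0) ?_⟩
  rw [← Real.sqrt_sq (le_max_right b 0)]
  exact Real.sqrt_le_sqrt ha

lemma integrable_exp_neg_mul_abs {b : ℝ} (hb : 0 < b) :
    Integrable (fun v : ℝ => Real.exp (-(b * |v|))) := by
  have h1 : IntegrableOn (fun v : ℝ => Real.exp (-(b * |v|))) (Ioi (0:ℝ)) := by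
    apply (exp_neg_integrableOn_Ioi 0 hb).congr_fun ?_ measurableSet_Ioi
    intro v hv
    show Real.exp (-b * v) = Real.exp (-(b * |v|))
    rw [abs_of_pos hv]
    ring_nf
  have h1c : IntegrableOn (fun v : ℝ => Real.exp (-(b * |v|))) (Ici (0:ℝ)) := by
    rwa [integrableOn_Ici_iff_integrableOn_Ioi]
  have h2' : Integrable ((Iic (0:ℝ)).indicator fun v : ℝ => Real.exp (-(b * |v|))) := by
    have hInd : Integrable ((Ici (0:ℝ)).indicator fun v : ℝ => Real.exp (-(b * |v|))) :=
      (integrable_indicator_iff measurableSet_Ici).2 h1c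
    have := hInd.comp_neg
    convert this using 1
    funext v
    by_cases hv : v ≤ 0
    · rw [indicator_of_mem (mem_Iic.2 hv),
        indicator_of_mem (mem_Ici.2 (by linarith : (0:ℝ) ≤ -v)), abs_neg]
    · rw [indicator_of_notMem (by simpa using hv),
        indicator_of_notMem (by simp; linarith [lt_of_not_ge hv])]
  have h2 : IntegrableOn (fun v : ℝ => Real.exp (-(b * |v|))) (Iic (0:ℝ)) :=
    (integrable_indicator_iff measurableSet_Iic).1 h2'
  have := h2.union h1
  rwa [Iic_union_Ioi, integrableOn_univ] at this

lemma integrable_poly_exp_neg_mul_abs {κ m : ℝ} (hκ : 0 < κ) (hm : 0 < m) :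
    Integrable (fun v : ℝ => (m + 1 + |v|) * Real.exp (-(κ * |v|))) := by
  have hcont : Continuous (fun v : ℝ => (m + 1 + |v|) * Real.exp (-(κ * |v|))) :=
    ((continuous_const.add continuous_abs)).mul
      (Real.continuous_exp.comp ((continuous_const.mul continuous_abs).neg))
  have h2κ : (0:ℝ) < 2 / κ := div_pos two_pos hκ
  have hC : (0:ℝ) < (m + 1) * (1 + 2 / κ) := by nlinarith
  apply Integrable.mono ((integrable_exp_neg_mul_abs (half_pos hκ)).const_mul
    ((m + 1) * (1 + 2 / κ))) hcont.aestronglyMeasurable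
  filter_upwards with v
  have hv : (0:ℝ) ≤ |v| := abs_nonneg v
  have key : m + 1 + |v| ≤ (m + 1) * (1 + 2 / κ) * Real.exp (κ / 2 * |v|) := by
    have h1 : 1 + κ / 2 * |v| ≤ Real.exp (κ / 2 * |v|) := by
      linarith [Real.add_one_le_exp (κ / 2 * |v|)]
    have e2 : (m + 1) * (1 + 2 / κ) * (κ / 2) = (m + 1) * (κ / 2 + 1) := by
      field_simp
    have hB : |v| ≤ (m + 1) * (κ / 2 + 1) * |v| :=
      le_mul_of_one_le_left hv (by nlinarith)
    have h2 : m + 1 + |v| ≤ (m + 1) * (1 + 2 / κ) * (1 + κ / 2 * |v|) := by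
      have e1 : (m + 1) * (1 + 2 / κ) * (1 + κ / 2 * |v|)
          = (m + 1) * (1 + 2 / κ) + (m + 1) * (1 + 2 / κ) * (κ / 2) * |v| := by ring
      have e2' : (m + 1) * (1 + 2 / κ) * (κ / 2) * |v| = (m + 1) * (κ / 2 + 1) * |v| := by
        rw [e2]
      have hA : m + 1 ≤ (m + 1) * (1 + 2 / κ) := by nlinarith
      linarith [e1, e2', hA, hB]
    calc m + 1 + |v| ≤ (m + 1) * (1 + 2 / κ) * (1 + κ / 2 * |v|) := h2
      _ ≤ (m + 1) * (1 + 2 / κ) * Real.exp (κ / 2 * |v|) :=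
          mul_le_mul_of_nonneg_left h1 hC.le
  have hf0 : (0:ℝ) ≤ (m + 1 + |v|) * Real.exp (-(κ * |v|)) := by positivity
  have hg0 : (0:ℝ) ≤ (m + 1) * (1 + 2 / κ) * Real.exp (-(κ / 2 * |v|)) := by
    exact mul_nonneg hC.le (Real.exp_nonneg _)
  simp only [Real.norm_eq_abs]
  rw [abs_of_nonneg hf0, abs_of_nonneg hg0]
  calc (m + 1 + |v|) * Real.exp (-(κ * |v|))
      ≤ (m + 1) * (1 + 2 / κ) * Real.exp (κ / 2 * |v|) * Real.exp (-(κ * |v|)) :=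
        mul_le_mul_of_nonneg_right key (Real.exp_nonneg _)
    _ = (m + 1) * (1 + 2 / κ) * Real.exp (-(κ / 2 * |v|)) := by
        rw [mul_assoc, ← Real.exp_add]; ring_nf

lemma setIntegral_shift (f : ℝ → ℝ) (a c : ℝ) :
    ∫ x in Ioi a, f x = ∫ y in Ioi (a - c), f (y + c) := by
  rw [← integral_indicator measurableSet_Ioi, ← integral_indicator measurableSet_Ioi]
  rw [← integral_add_right_eq_self (fun x => (Ioi a).indicator f x) c]
  congr 1
  funext y
  by_cases hy : a - c < y
  · rw [indicator_of_mem (mem_Ioi.2 (by linarith : a < y + c)),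
      indicator_of_mem (mem_Ioi.2 hy)]
  · rw [indicator_of_notMem (by simp only [mem_Ioi]; intro h; exact hy (by linarith)),
      indicator_of_notMem (by simpa using hy)]

end LaplaceAux

open LaplaceAux

set_option maxHeartbeats 2000000 in
/-- Laplace-method evaluation of the asymptotic stationary mean:
`√(A/2π)·(1−ρ)·∫_0^∞ √(x(x+1)) e^{−AΦ(x)} dx → ρ/(1−ρ)`. -/
theorem laplace_mean_evaluation (ρ : ℝ) (hρ0 : 0 < ρ) (hρ1 : ρ < 1) :
    Tendsto
      (fun A : ℝ => Real.sqrt (A / (2 * π)) * (1 - ρ) *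
        ∫ x in Ioi (0:ℝ), Real.sqrt (x * (x + 1)) * Real.exp (-(A * Phi ρ x)))
      atTop (𝓝 (ρ / (1 - ρ))) := by
  have h1 : (0:ℝ) < 1 - ρ := by linarith
  set m := ρ / (1 - ρ) with hmdef
  set c := (1 - ρ)^2 / ρ with hcdef
  have hm : 0 < m := m_pos hρ0 hρ1
  have hc : 0 < c := c_pos hρ0 hρ1
  obtain ⟨δ, hδpos, hδm, hquad⟩ := quad_bounds hρ0 hρ1 (ε := c/2) (half_pos hc)
  rw [← hmdef, ← hcdef] at hquad
  rw [← hmdef] at hδm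
  obtain ⟨κ, hκpos, htail⟩ := tail_bound hρ0 hρ1 hδpos hδm
  rw [← hmdef] at htail
  set Mb := Real.sqrt ((m + δ) * (m + δ + 1)) with hMbdef
  set G : ℝ → ℝ := fun v =>
    Mb * Real.exp (-(c/4) * v^2) + (m + 1 + |v|) * Real.exp (-(κ * |v|)) with hGdef
  set F : ℝ → ℝ → ℝ := fun A v =>
    (Ioi (-(m * Real.sqrt A))).indicator
      (fun w => Real.sqrt ((m + (Real.sqrt A)⁻¹ * w) * ((m + (Real.sqrt A)⁻¹ * w) + 1)) *
        Real.exp (-(A * Phi ρ (m + (Real.sqrt A)⁻¹ * w)))) v with hFdef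
  -- Step A: dominated convergence
  have hlimfun : Tendsto (fun A : ℝ => ∫ v, F A v) atTop
      (𝓝 (∫ v : ℝ, Real.sqrt (m * (m + 1)) * Real.exp (-(c/2) * v^2))) := by
    apply tendsto_integral_filter_of_dominated_convergence G
    · -- measurability
      apply Eventually.of_forall
      intro A
      apply Measurable.aestronglyMeasurable
      apply Measurable.indicator ?_ measurableSet_Ioi
      have haff : Measurable (fun w : ℝ => m + (Real.sqrt A)⁻¹ * w) :=
        measurable_const.add (measurable_id.const_mul _)
      exact (Real.continuous_sqrt.measurable.comp (haff.mul (haff.add_const 1))).mul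
        (Real.continuous_exp.measurable.comp
          (((measurable_Phi ρ).comp haff).const_mul A).neg)
    · -- bound
      filter_upwards [eventually_ge_atTop (1:ℝ)] with A hA
      apply Eventually.of_forall
      intro v
      have hA0 : (0:ℝ) < A := by linarith
      have hsApos : (0:ℝ) < Real.sqrt A := Real.sqrt_pos.2 hA0
      have hsA1 : (1:ℝ) ≤ Real.sqrt A := by
        rw [show (1:ℝ) = Real.sqrt 1 from Real.sqrt_one.symm]
        exact Real.sqrt_le_sqrt hA
      have hGnonneg : 0 ≤ G v := by
        simp only [hGdef]
        positivity
      by_cases hv : v ∈ Ioi (-(m * Real.sqrt A))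
      · have hFv : F A v =
            Real.sqrt ((m + (Real.sqrt A)⁻¹ * v) * ((m + (Real.sqrt A)⁻¹ * v) + 1)) *
              Real.exp (-(A * Phi ρ (m + (Real.sqrt A)⁻¹ * v))) := by
          simp only [hFdef]
          rw [indicator_of_mem hv]
        rw [hFv]
        set s := (Real.sqrt A)⁻¹ * v with hsdef
        have hsm : -m < s := by
          have h2 := mul_lt_mul_of_pos_left (mem_Ioi.1 hv) (inv_pos.2 hsApos)
          have h3 : (Real.sqrt A)⁻¹ * -(m * Real.sqrt A) = -m := by field_simp
          rw [h3] at h2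
          exact h2
        have hx0 : 0 < m + s := by linarith
        have hsv : |s| ≤ |v| := by
          rw [hsdef, abs_mul, abs_inv, abs_of_nonneg (Real.sqrt_nonneg A)]
          apply mul_le_of_le_one_left (abs_nonneg v)
          exact inv_le_one_of_one_le₀ hsA1
        have hAs : A * s^2 = v^2 := by
          rw [hsdef, mul_pow, inv_pow, Real.sq_sqrt hA0.le]
          field_simp
        rw [Real.norm_eq_abs, abs_of_nonneg (by positivity)]
        by_cases hcase : |s| ≤ δ
        · -- quadratic regime
          have hq := (hquad s hcase).1
          have habs := abs_le.1 hcase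
          have hsqrtb : Real.sqrt ((m + s) * ((m + s) + 1)) ≤ Mb := by
            rw [hMbdef]
            apply Real.sqrt_le_sqrt
            nlinarith
          have hexpb : Real.exp (-(A * Phi ρ (m + s))) ≤ Real.exp (-(c/4) * v^2) := by
            apply Real.exp_le_exp.2
            have h4 : A * ((c - c/2)/2 * s^2) ≤ A * Phi ρ (m + s) :=
              mul_le_mul_of_nonneg_left hq hA0.le
            have h5 : A * ((c - c/2)/2 * s^2) = c/4 * (A * s^2) := by ring
            rw [h5, hAs] at h4
            linarith
          calc Real.sqrt ((m + s) * ((m + s) + 1)) * Real.exp (-(A * Phi ρ (m + s)))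
              ≤ Mb * Real.exp (-(c/4) * v^2) := by
                apply mul_le_mul hsqrtb hexpb (Real.exp_nonneg _) (Real.sqrt_nonneg _)
            _ ≤ G v := by
                simp only [hGdef]
                have : 0 ≤ (m + 1 + |v|) * Real.exp (-(κ * |v|)) := by positivity
                linarith
        · -- tail regime
          have hδs : δ ≤ |s| := (not_le.1 hcase).le
          have ht := htail s hsm hδs
          have hsqrtb : Real.sqrt ((m + s) * ((m + s) + 1)) ≤ m + 1 + |v| := by
            have h6 : Real.sqrt ((m + s) * ((m + s) + 1)) ≤ m + s + 1 := by
              rw [show (m + s) * ((m + s) + 1) = (m + s) * (m + s + 1) by ring]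
              calc Real.sqrt ((m + s) * (m + s + 1))
                  ≤ Real.sqrt ((m + s + 1) * (m + s + 1)) := by
                    apply Real.sqrt_le_sqrt; nlinarith
                _ = m + s + 1 := by
                    rw [show (m + s + 1) * (m + s + 1) = (m + s + 1)^2 by ring,
                      Real.sqrt_sq (by linarith)]
            have h7 : s ≤ |v| := le_trans (le_abs_self s) hsv
            linarith
          have hexpb : Real.exp (-(A * Phi ρ (m + s))) ≤ Real.exp (-(κ * |v|)) := by
            apply Real.exp_le_exp.2
            have h4 : A * (κ * |s|) ≤ A * Phi ρ (m + s) :=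
              mul_le_mul_of_nonneg_left ht hA0.le
            have hh : A * (Real.sqrt A)⁻¹ = Real.sqrt A := by
              rw [inv_eq_one_div, mul_one_div, div_eq_iff hsApos.ne']
              exact (Real.mul_self_sqrt hA0.le).symm
            have h5 : A * |s| = Real.sqrt A * |v| := by
              rw [hsdef, abs_mul, abs_inv, abs_of_nonneg (Real.sqrt_nonneg A),
                ← mul_assoc, hh]
            have h6 : A * (κ * |s|) = κ * (A * |s|) := by ring
            rw [h6, h5] at h4
            have h7 : κ * |v| ≤ κ * (Real.sqrt A * |v|) := by
              apply mul_le_mul_of_nonneg_left ?_ hκpos.le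
              exact le_mul_of_one_le_left (abs_nonneg v) hsA1
            linarith
          calc Real.sqrt ((m + s) * ((m + s) + 1)) * Real.exp (-(A * Phi ρ (m + s)))
              ≤ (m + 1 + |v|) * Real.exp (-(κ * |v|)) := by
                apply mul_le_mul hsqrtb hexpb (Real.exp_nonneg _) (by positivity)
            _ ≤ G v := by
                simp only [hGdef]
                have : 0 ≤ Mb * Real.exp (-(c/4) * v^2) := by positivity
                linarith
      · have hFv : F A v = 0 := by
          simp only [hFdef]
          rw [indicator_of_notMem hv]
        rw [hFv]
        simpa using hGnonneg
    · -- integrability of the bound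
      exact ((integrable_exp_neg_mul_sq (by linarith : (0:ℝ) < c/4)).const_mul Mb).add
        (integrable_poly_exp_neg_mul_abs hκpos hm)
    · -- pointwise convergence
      apply Eventually.of_forall
      intro v
      have hsAt : Tendsto (fun A : ℝ => (Real.sqrt A)⁻¹ * v) atTop (𝓝 0) := by
        have h2 := LaplaceAux.tendsto_sqrt_atTop.inv_tendsto_atTop.mul_const v
        simpa using h2
      have hsqrtfac : Tendsto
          (fun A : ℝ => Real.sqrt ((m + (Real.sqrt A)⁻¹ * v) *
            ((m + (Real.sqrt A)⁻¹ * v) + 1))) atTop (𝓝 (Real.sqrt (m * (m + 1)))) := by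
        have hcont : Continuous fun t : ℝ => Real.sqrt ((m + t) * ((m + t) + 1)) := by
          continuity
        have h2 := (hcont.tendsto 0).comp hsAt
        simp only [Function.comp_def, add_zero] at h2
        convert h2 using 2 <;> ring
      have hexp_arg : Tendsto (fun A : ℝ => A * Phi ρ (m + (Real.sqrt A)⁻¹ * v)) atTop
          (𝓝 (c/2 * v^2)) := by
        by_cases hv0 : v = 0
        · subst hv0
          have heq : (fun A : ℝ => A * Phi ρ (m + (Real.sqrt A)⁻¹ * 0)) = fun _ => 0 := by
            funext A
            rw [mul_zero, add_zero, show Phi ρ m = 0 from Phi_m_eq_zero hρ0 hρ1, mul_zero]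
          rw [heq]
          norm_num
        · rw [Metric.tendsto_atTop]
          intro ε' hε'
          have hv2 : (0:ℝ) < v^2 := by positivity
          obtain ⟨δ₁, hδ₁pos, _, hq1⟩ := quad_bounds hρ0 hρ1 (ε := ε' / v^2)
            (div_pos hε' hv2)
          rw [← hmdef, ← hcdef] at hq1
          refine ⟨max 1 ((v/δ₁)^2 + 1), fun A hA => ?_⟩
          have hA1 : (1:ℝ) ≤ A := le_trans (le_max_left _ _) hA
          have hA0 : (0:ℝ) < A := by linarith
          have hsApos : (0:ℝ) < Real.sqrt A := Real.sqrt_pos.2 hA0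
          have hslt : |(Real.sqrt A)⁻¹ * v| ≤ δ₁ := by
            have h2 : (v/δ₁)^2 + 1 ≤ A := le_trans (le_max_right _ _) hA
            have h3 : (|v|/δ₁)^2 ≤ A := by
              rw [div_pow, sq_abs, ← div_pow]
              linarith
            have h4 : |v|/δ₁ ≤ Real.sqrt A := by
              rw [show |v|/δ₁ = Real.sqrt ((|v|/δ₁)^2) from
                (Real.sqrt_sq (by positivity)).symm]
              exact Real.sqrt_le_sqrt h3
            rw [abs_mul, abs_inv, abs_of_nonneg (Real.sqrt_nonneg A)]
            rw [inv_mul_le_iff₀ hsApos]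
            rw [div_le_iff₀ hδ₁pos] at h4
            linarith [h4]
          have hq2 := hq1 ((Real.sqrt A)⁻¹ * v) hslt
          have hAs : A * ((Real.sqrt A)⁻¹ * v)^2 = v^2 := by
            rw [mul_pow, inv_pow, Real.sq_sqrt hA0.le]
            field_simp
          have hlow := mul_le_mul_of_nonneg_left hq2.1 hA0.le
          have hhigh := mul_le_mul_of_nonneg_left hq2.2 hA0.le
          have e1 : A * ((c - ε' / v^2)/2 * ((Real.sqrt A)⁻¹ * v)^2)
              = (c - ε' / v^2)/2 * v^2 := by
            rw [show A * ((c - ε' / v^2)/2 * ((Real.sqrt A)⁻¹ * v)^2)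
              = (c - ε' / v^2)/2 * (A * ((Real.sqrt A)⁻¹ * v)^2) by ring, hAs]
          have e2 : A * ((c + ε' / v^2)/2 * ((Real.sqrt A)⁻¹ * v)^2)
              = (c + ε' / v^2)/2 * v^2 := by
            rw [show A * ((c + ε' / v^2)/2 * ((Real.sqrt A)⁻¹ * v)^2)
              = (c + ε' / v^2)/2 * (A * ((Real.sqrt A)⁻¹ * v)^2) by ring, hAs]
          rw [e1] at hlow
          rw [e2] at hhigh
          have hεv : ε' / v^2 * v^2 = ε' := div_mul_cancel₀ ε' (ne_of_gt hv2)
          have e3 : (c - ε' / v^2)/2 * v^2 = c/2 * v^2 - (ε' / v^2 * v^2)/2 := by ring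
          have e4 : (c + ε' / v^2)/2 * v^2 = c/2 * v^2 + (ε' / v^2 * v^2)/2 := by ring
          rw [Real.dist_eq, abs_lt]
          constructor
          · rw [e3, hεv] at hlow; linarith
          · rw [e4, hεv] at hhigh; linarith
      have hexp : Tendsto (fun A : ℝ => Real.exp (-(A * Phi ρ (m + (Real.sqrt A)⁻¹ * v))))
          atTop (𝓝 (Real.exp (-(c/2) * v^2))) := by
        have h2 := (Real.continuous_exp.tendsto _).comp hexp_arg.neg
        simp only [Function.comp_def] at h2
        convert h2 using 2
        ring
      have hprod := hsqrtfac.mul hexp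
      apply hprod.congr'
      have hmain : ∀ᶠ A in atTop, ((|v| + 1)/m)^2 ≤ A := eventually_ge_atTop _
      filter_upwards [hmain] with A hA'
      have hA0 : (0:ℝ) < A := lt_of_lt_of_le (by positivity) hA'
      have h4 : (|v| + 1)/m ≤ Real.sqrt A := by
        rw [show (|v| + 1)/m = Real.sqrt (((|v| + 1)/m)^2) from
          (Real.sqrt_sq (by positivity)).symm]
        exact Real.sqrt_le_sqrt hA'
      have hmem : v ∈ Ioi (-(m * Real.sqrt A)) := by
        rw [mem_Ioi]
        rw [div_le_iff₀ hm] at h4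
        have h5 : -v ≤ |v| := neg_le_abs v
        nlinarith [Real.sqrt_nonneg A]
      simp only [hFdef]
      rw [indicator_of_mem hmem]
  -- Step B: value of the limit integral
  have hval : (∫ v : ℝ, Real.sqrt (m * (m + 1)) * Real.exp (-(c/2) * v^2))
      = Real.sqrt (m * (m + 1)) * Real.sqrt (π / (c/2)) := by
    rw [integral_const_mul, integral_gaussian]
  -- Step C: limit constant algebra
  have hconst : (1 - ρ) / Real.sqrt (2 * π) *
      (Real.sqrt (m * (m + 1)) * Real.sqrt (π / (c/2))) = ρ / (1 - ρ) := by
    have hmm : m * (m + 1) = ρ / (1 - ρ)^2 := m_mul hρ0 hρ1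
    have hpc : π / (c/2) = 2 * π * (ρ / (1 - ρ)^2) := by
      rw [hcdef]
      field_simp
    have hX : (0:ℝ) ≤ ρ / (1 - ρ)^2 := by positivity
    rw [hmm, hpc, Real.sqrt_mul (by positivity : (0:ℝ) ≤ 2 * π)]
    rw [show Real.sqrt (ρ / (1 - ρ)^2) * (Real.sqrt (2 * π) * Real.sqrt (ρ / (1 - ρ)^2))
      = Real.sqrt (2 * π) * (Real.sqrt (ρ / (1 - ρ)^2) * Real.sqrt (ρ / (1 - ρ)^2)) by ring]
    rw [Real.mul_self_sqrt hX]
    have hs2π : (0:ℝ) < Real.sqrt (2 * π) := Real.sqrt_pos.2 (by positivity)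
    field_simp
  -- Step D: eventual equality
  have hev : ∀ᶠ A in atTop, Real.sqrt (A / (2 * π)) * (1 - ρ) *
      (∫ x in Ioi (0:ℝ), Real.sqrt (x * (x + 1)) * Real.exp (-(A * Phi ρ x)))
      = (1 - ρ) / Real.sqrt (2 * π) * ∫ v, F A v := by
    filter_upwards [eventually_ge_atTop (1:ℝ)] with A hA
    have hA0 : (0:ℝ) < A := by linarith
    have hsApos : (0:ℝ) < Real.sqrt A := Real.sqrt_pos.2 hA0
    set g0 : ℝ → ℝ := fun x => Real.sqrt (x * (x + 1)) * Real.exp (-(A * Phi ρ x))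
      with hg0def
    have step1 : (∫ x in Ioi (0:ℝ), g0 x) = ∫ y in Ioi (-m), g0 (y + m) := by
      have h2 := setIntegral_shift g0 0 m
      rw [zero_sub] at h2
      exact h2
    have step2 : (∫ w in Ioi (-(m * Real.sqrt A)), g0 ((Real.sqrt A)⁻¹ * w + m))
        = Real.sqrt A • ∫ y in Ioi (-m), g0 (y + m) := by
      have h2 := integral_comp_mul_left_Ioi (fun y => g0 (y + m)) (-(m * Real.sqrt A))
        (inv_pos.2 hsApos)
      rw [inv_inv] at h2
      have harg : (Real.sqrt A)⁻¹ * -(m * Real.sqrt A) = -m := by field_simp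
      rw [harg] at h2
      exact h2
    have step3 : (∫ v, F A v) = ∫ w in Ioi (-(m * Real.sqrt A)),
        g0 ((Real.sqrt A)⁻¹ * w + m) := by
      simp only [hFdef]
      rw [integral_indicator measurableSet_Ioi]
      apply setIntegral_congr_fun measurableSet_Ioi
      intro w _
      simp only [hg0def]
      rw [add_comm m ((Real.sqrt A)⁻¹ * w)]
    have hJ : (∫ v, F A v) = Real.sqrt A * ∫ x in Ioi (0:ℝ), g0 x := by
      rw [step3, step2, step1, smul_eq_mul]
    rw [hJ, Real.sqrt_div hA0.le]
    ring
  have hmain := hlimfun.const_mul ((1 - ρ) / Real.sqrt (2 * π))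
  rw [hval] at hmain
  have hfinal := hmain.congr' (EventuallyEq.symm hev)
  rwa [hconst] at hfinal
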